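/- For n ≥ 2, the map Φ that assigns to a laminar family F the edge set Φ(F) = {{min S, secondmin S} : S ∈ F} (where min S and secondmin S are the smallest and second-smallest elements of S) restricts to a bijection from the set of those maximal laminar families F of subsets of [n] with all members of cardinality ≥ 2 for which Φ(F) is a spanning tree of the complete graph K_n (the 'proper' maximal nested sets), onto the set of all edge sets of the form {{f(j), j} : j = 2,…,n} with 1 ≤ f(j) < j for all j (the no broken circuit bases of Π_n with respect to the lexicographic atom order). -/

import Mathlib

/-- A family of subsets of `[n]` is laminar if any two members are disjoint or comparable. -/
def Laminar {n : ℕ} (F : Finset (Finset (Fin n))) : Prop :=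
  ∀ S ∈ F, ∀ T ∈ F, S ⊆ T ∨ T ⊆ S ∨ Disjoint S T

/-- A laminar family on `[n]` all of whose members have cardinality at least `2`. -/
def GoodLaminar (n : ℕ) (F : Finset (Finset (Fin n))) : Prop :=
  Laminar F ∧ ∀ S ∈ F, 2 ≤ S.card

/-- A maximal laminar family of subsets of `[n]` with all members of cardinality `≥ 2`. -/
def MaxGoodLaminar (n : ℕ) (F : Finset (Finset (Fin n))) : Prop :=
  GoodLaminar n F ∧ ∀ G : Finset (Finset (Fin n)), GoodLaminar n G → F ⊆ G → G = F

/-- `{min S, secondmin S}`: the set of the two smallest elements of `S`. -/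
def minTwo {n : ℕ} (S : Finset (Fin n)) : Finset (Fin n) :=
  ((S.sort (· ≤ ·)).take 2).toFinset

/-- The simple graph on `Fin n` associated with a set `E` of (two-element) subsets. -/
def graphOf {n : ℕ} (E : Finset (Finset (Fin n))) : SimpleGraph (Fin n) where
  Adj x y := x ≠ y ∧ ∃ e ∈ E, x ∈ e ∧ y ∈ e
  symm := ⟨fun _ _ h => ⟨h.1.symm, h.2.imp fun _ he => ⟨he.1, he.2.2, he.2.1⟩⟩⟩
  loopless := ⟨fun _ h => h.1 rfl⟩

/-- `E` is a spanning tree of the complete graph `K_n` on vertex set `Fin n`:  a set of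
`n - 1` two-element subsets forming a connected acyclic graph on all `n` vertices. -/
def IsSpanningTree (n : ℕ) (E : Finset (Finset (Fin n))) : Prop :=
  (∀ e ∈ E, e.card = 2) ∧ E.card = n - 1 ∧ (graphOf E).Connected ∧ (graphOf E).IsAcyclic


open Finset

variable {n : ℕ}

lemma pair_eq_pair_iff {a b c d : Fin n} (hab : a < b) (hcd : c < d)
    (h : ({a, b} : Finset (Fin n)) = {c, d}) : a = c ∧ b = d := by
  have ha : a = c ∨ a = d := by
    have : a ∈ ({c, d} : Finset (Fin n)) := h ▸ (by simp)
    simpa using this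
  have hb : b = c ∨ b = d := by
    have : b ∈ ({c, d} : Finset (Fin n)) := h ▸ (by simp)
    simpa using this
  rcases ha with ha | ha
  · refine ⟨ha, ?_⟩
    rcases hb with hb | hb
    · exact absurd (ha ▸ hb ▸ hab) (lt_irrefl _)
    · exact hb
  · exfalso
    rcases hb with hb | hb
    · exact absurd ((ha ▸ hab).trans (hb ▸ hcd)) (lt_irrefl _)
    · exact absurd (ha ▸ hb ▸ hab) (lt_irrefl _)

lemma minTwo_eq_pair {S : Finset (Fin n)} {a b : Fin n} (ha : a ∈ S) (hb : b ∈ S)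
    (hab : a < b) (hmin : ∀ x ∈ S, x = a ∨ b ≤ x) : minTwo S = {a, b} := by
  have hnd := Finset.sort_nodup S (· ≤ ·)
  have hsorted := Finset.pairwise_sort S (· ≤ ·)
  have hmem : ∀ x : Fin n, x ∈ S.sort (· ≤ ·) ↔ x ∈ S := fun x => Finset.mem_sort _
  rcases hl : S.sort (· ≤ ·) with _ | ⟨x, rest⟩
  · exfalso; have := (hmem a).2 ha; rw [hl] at this; simp at this
  · rw [hl] at hnd hsorted hmem
    have hxS : x ∈ S := (hmem x).1 (by simp)
    have hxa : x = a := by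
      rcases hmin x hxS with h' | h'
      · exact h'
      · exfalso
        have haml : a ∈ x :: rest := (hmem a).2 ha
        have hxlea : x ≤ a := by
          rcases List.mem_cons.1 haml with h'' | h''
          · exact le_of_eq h''.symm
          · exact (List.pairwise_cons.1 hsorted).1 a h''
        exact absurd (lt_of_lt_of_le hab (h'.trans hxlea)) (lt_irrefl _)
    have hbrest : b ∈ rest := by
      have hbl := (hmem b).2 hb
      rcases List.mem_cons.1 hbl with h' | h'
      · exact absurd (hxa ▸ h' ▸ hab) (lt_irrefl _)
      · exact h'
    rcases hr : rest with _ | ⟨y, t⟩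
    · rw [hr] at hbrest; simp at hbrest
    · rw [hr] at hnd hsorted hmem hbrest
      have hyS : y ∈ S := (hmem y).1 (by simp)
      have hya : y ≠ a := by
        intro h'
        rw [← hxa] at h'
        simp [h'] at hnd
      have hyb : y = b := by
        rcases hmin y hyS with h' | h'
        · exact absurd h' hya
        · have hs2 := (List.pairwise_cons.1 hsorted).2
          have : y ≤ b := by
            rcases List.mem_cons.1 hbrest with h'' | h''
            · exact le_of_eq h''.symm
            · exact (List.pairwise_cons.1 hs2).1 b h''
          exact le_antisymm this h'
      have : (S.sort (· ≤ ·)).take 2 = [a, b] := by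
        rw [hl, hr, hxa, hyb]
        rfl
      unfold minTwo
      rw [this]
      simp
lemma laminar_card_aux {n : ℕ} :
    ∀ (k : ℕ) (F : Finset (Finset (Fin n))) (M : Finset (Fin n)), F.card ≤ k →
      Laminar F → (∀ S ∈ F, 2 ≤ S.card) → M ∈ F → (∀ S ∈ F, S ⊆ M) →
      F.card + 1 ≤ M.card := by
  intro k
  induction k with
  | zero =>
    intro F M hk _ _ hM _
    exact absurd (Finset.card_pos.2 ⟨M, hM⟩) (by omega)
  | succ k ih =>
    intro F M hk hlam hcard hM hsub
    classical
    set F' := F.erase M with hF'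
    set Mx := F'.filter (fun S => ∀ T ∈ F', S ⊆ T → T = S) with hMx
    -- every member of F' is contained in a member of Mx
    have hstep1 : ∀ S ∈ F', ∃ M' ∈ Mx, S ⊆ M' := by
      intro S hS
      have hne : (F'.filter (fun T => S ⊆ T)).Nonempty := ⟨S, by simp [hS]⟩
      obtain ⟨M', hM', hmax⟩ := Finset.exists_maximal hne
      rw [Finset.mem_filter] at hM'
      refine ⟨M', ?_, hM'.2⟩
      rw [hMx, Finset.mem_filter]
      refine ⟨hM'.1, fun T hT hsub' => ?_⟩
      by_contra hne'
      exact hne' (le_antisymm (hmax (Finset.mem_filter.2 ⟨hT, hM'.2.trans hsub'⟩) hsub') hsub')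
    -- members of Mx are pairwise disjoint
    have hdisj : ∀ M₁ ∈ Mx, ∀ M₂ ∈ Mx, M₁ ≠ M₂ → Disjoint M₁ M₂ := by
      intro M₁ h₁ M₂ h₂ hne
      rw [hMx, Finset.mem_filter] at h₁ h₂
      rcases hlam M₁ (Finset.mem_of_mem_erase h₁.1) M₂ (Finset.mem_of_mem_erase h₂.1)
        with h | h | h
      · exact absurd (h₁.2 M₂ h₂.1 h) hne.symm
      · exact absurd (h₂.2 M₁ h₁.1 h) hne
      · exact h
    have hcover : F' = Mx.biUnion (fun M' => F'.filter (· ⊆ M')) := by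
      apply Finset.Subset.antisymm
      · intro S hS
        obtain ⟨M', hM', hsub'⟩ := hstep1 S hS
        exact Finset.mem_biUnion.2 ⟨M', hM', Finset.mem_filter.2 ⟨hS, hsub'⟩⟩
      · intro S hS
        obtain ⟨M', _, hS'⟩ := Finset.mem_biUnion.1 hS
        exact (Finset.mem_filter.1 hS').1
    have hfibdisj : ∀ M₁ ∈ Mx, ∀ M₂ ∈ Mx, M₁ ≠ M₂ →
        Disjoint (F'.filter (· ⊆ M₁)) (F'.filter (· ⊆ M₂)) := by
      intro M₁ h₁ M₂ h₂ hne
      rw [Finset.disjoint_left]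
      intro S hS₁ hS₂
      rw [Finset.mem_filter] at hS₁ hS₂
      have hSne : S.Nonempty := Finset.card_pos.1
        (by have := hcard S (Finset.mem_of_mem_erase hS₁.1); omega)
      exact Finset.disjoint_left.1 (hdisj M₁ h₁ M₂ h₂ hne) (hS₁.2 hSne.choose_spec)
        (hS₂.2 hSne.choose_spec)
    have hFcard : F.card = F'.card + 1 := by
      rw [hF', Finset.card_erase_of_mem hM]
      have := Finset.card_pos.2 ⟨M, hM⟩
      omega
    have hsum : F'.card = ∑ M' ∈ Mx, (F'.filter (· ⊆ M')).card := by
      conv_lhs => rw [hcover]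
      exact Finset.card_biUnion hfibdisj
    -- per-fiber bound
    have hfib : ∀ M' ∈ Mx, (F'.filter (· ⊆ M')).card + 1 ≤ M'.card := by
      intro M' hM'
      rw [hMx, Finset.mem_filter] at hM'
      have hM'F : M' ∈ F := Finset.mem_of_mem_erase hM'.1
      apply ih (F'.filter (· ⊆ M')) M'
      · have h1 : (F'.filter (· ⊆ M')).card ≤ F'.card := Finset.card_filter_le _ _
        omega
      · intro S hS T hT
        exact hlam S (Finset.mem_of_mem_erase (Finset.mem_filter.1 hS).1)
          T (Finset.mem_of_mem_erase (Finset.mem_filter.1 hT).1)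
      · intro S hS
        exact hcard S (Finset.mem_of_mem_erase (Finset.mem_filter.1 hS).1)
      · exact Finset.mem_filter.2 ⟨hM'.1, Finset.Subset.refl _⟩
      · intro S hS
        exact (Finset.mem_filter.1 hS).2
    -- each M' is a proper subset of M
    have hMlt : ∀ M' ∈ Mx, M'.card + 1 ≤ M.card := by
      intro M' hM'
      rw [hMx, Finset.mem_filter] at hM'
      have hM'F : M' ∈ F := Finset.mem_of_mem_erase hM'.1
      have hsubM : M' ⊆ M := hsub M' hM'F
      have hneM : M' ≠ M := Finset.ne_of_mem_erase hM'.1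
      have := Finset.card_lt_card (Finset.ssubset_iff_subset_ne.2 ⟨hsubM, hneM⟩)
      omega
    -- the union of Mx is inside M
    have hMsum : ∑ M' ∈ Mx, M'.card ≤ M.card := by
      have : ∑ M' ∈ Mx, M'.card = (Mx.biUnion id).card := (Finset.card_biUnion
        (fun M₁ h₁ M₂ h₂ hne => hdisj M₁ h₁ M₂ h₂ hne)).symm
      rw [this]
      apply Finset.card_le_card
      intro x hx
      obtain ⟨M', hM', hx'⟩ := Finset.mem_biUnion.1 hx
      rw [hMx, Finset.mem_filter] at hM'
      exact hsub M' (Finset.mem_of_mem_erase hM'.1) hx'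
    rcases Finset.eq_empty_or_nonempty Mx with hE | hNE
    · rw [hE] at hcover
      simp at hcover
      rw [hFcard, hcover]
      have := hcard M hM
      simp
      omega
    · rcases Nat.lt_or_ge Mx.card 2 with h2 | h2
      · -- exactly one maximal element
        have h1 : Mx.card = 1 := by
          have := Finset.card_pos.2 hNE
          omega
        obtain ⟨M', hMxeq⟩ := Finset.card_eq_one.1 h1
        have hM'Mx : M' ∈ Mx := hMxeq ▸ Finset.mem_singleton_self M'
        have hb1 := hfib M' hM'Mx
        have hb2 := hMlt M' hM'Mx
        rw [hFcard, hsum, hMxeq, Finset.sum_singleton]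
        omega
      · -- at least two maximal elements
        have hb : F'.card + Mx.card ≤ ∑ M' ∈ Mx, M'.card := by
          have h3 : ∑ M' ∈ Mx, ((Finset.filter (fun x => x ⊆ M') F').card + 1)
              ≤ ∑ M' ∈ Mx, M'.card := Finset.sum_le_sum hfib
          rw [Finset.sum_add_distrib, Finset.sum_const, smul_eq_mul, mul_one] at h3
          rw [hsum]
          exact h3
        omega

lemma goodLaminar_card_le {n : ℕ} (hn : 2 ≤ n) (F : Finset (Finset (Fin n)))
    (hF : GoodLaminar n F) : F.card ≤ n - 1 := by
  classical
  set F' := insert (Finset.univ : Finset (Fin n)) F with hF'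
  have hlam : Laminar F' := by
    intro S hS T hT
    rcases Finset.mem_insert.1 hS with rfl | hS
    · exact Or.inr (Or.inl (Finset.subset_univ _))
    · rcases Finset.mem_insert.1 hT with rfl | hT
      · exact Or.inl (Finset.subset_univ _)
      · exact hF.1 S hS T hT
  have hcard : ∀ S ∈ F', 2 ≤ S.card := by
    intro S hS
    rcases Finset.mem_insert.1 hS with rfl | hS
    · rw [Finset.card_univ, Fintype.card_fin]
      omega
    · exact hF.2 S hS
  have := laminar_card_aux F'.card F' Finset.univ (le_refl _) hlam hcard
    (Finset.mem_insert_self _ _) (fun S _ => Finset.subset_univ S)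
  have hle : F.card ≤ F'.card := Finset.card_le_card (Finset.subset_insert _ _)
  rw [Finset.card_univ] at this
  simp at this
  omega

def gstep {n : ℕ} (f : Fin n → Fin n) (j : Fin n) (x : Fin n) : Fin n :=
  if x < j then x
  else if h : f x < x then gstep f j (f x) else x
termination_by x.val
decreasing_by exact h

lemma gstep_of_lt {n : ℕ} {f : Fin n → Fin n} {j x : Fin n} (h : x < j) :
    gstep f j x = x := by
  rw [gstep]; simp [h]

lemma gstep_of_ge {n : ℕ} {f : Fin n → Fin n} {j x : Fin n} (h : ¬ x < j) (h2 : f x < x) :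
    gstep f j x = gstep f j (f x) := by
  rw [gstep]; simp [h, h2]

section GStep

variable {n : ℕ} {f : Fin n → Fin n} (hf : ∀ x : Fin n, x.val ≠ 0 → f x < x)

include hf

lemma nz_of_not_lt {j x : Fin n} (hj : j.val ≠ 0) (h : ¬ x < j) : x.val ≠ 0 := by
  rw [Fin.not_lt] at h
  have := Fin.le_def.1 h
  omega

lemma gstep_lt {j : Fin n} (hj : j.val ≠ 0) (x : Fin n) : gstep f j x < j := by
  by_cases h : x < j
  · rw [gstep_of_lt h]; exact h
  · have h2 := hf x (nz_of_not_lt hf hj h)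
    rw [gstep_of_ge h h2]
    exact gstep_lt hj (f x)
termination_by x.val
decreasing_by exact h2

lemma gstep_comp {i j : Fin n} (hj : j.val ≠ 0) (hij : j ≤ i) (x : Fin n) :
    gstep f j (gstep f i x) = gstep f j x := by
  by_cases h : x < i
  · rw [gstep_of_lt h]
  · have hx0 : x.val ≠ 0 := by
      rw [Fin.not_lt] at h
      have h1 := Fin.le_def.1 h
      have h2 := Fin.le_def.1 hij
      omega
    have h2 := hf x hx0
    have h' : ¬ x < j := by
      rw [Fin.not_lt] at h ⊢
      exact hij.trans h
    rw [gstep_of_ge h h2, gstep_of_ge h' h2]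
    exact gstep_comp hj hij (f x)
termination_by x.val
decreasing_by exact h2

lemma gstep_congr {f' : Fin n → Fin n} (hc : ∀ x : Fin n, x.val ≠ 0 → f x = f' x)
    {j : Fin n} (hj : j.val ≠ 0) (x : Fin n) : gstep f j x = gstep f' j x := by
  by_cases h : x < j
  · rw [gstep_of_lt h, gstep_of_lt h]
  · have hx0 := nz_of_not_lt hf hj h
    have h2 := hf x hx0
    have h2' : f' x < x := (hc x hx0) ▸ h2
    rw [gstep_of_ge h h2, gstep_of_ge h h2', ← hc x hx0]
    exact gstep_congr hc hj (f x)
termination_by x.val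
decreasing_by exact h2

end GStep

/-- The laminar set attached to `j` by the parent function `f`. -/
def mySet {n : ℕ} (f : Fin n → Fin n) (j : Fin n) : Finset (Fin n) :=
  Finset.univ.filter fun x => gstep f j x = f j ∧ (j ≤ x ∨ x = f j)

lemma mem_mySet {n : ℕ} {f : Fin n → Fin n} {j x : Fin n} :
    x ∈ mySet f j ↔ gstep f j x = f j ∧ (j ≤ x ∨ x = f j) := by
  simp [mySet]

section MySet

variable {n : ℕ} {f : Fin n → Fin n} (hf : ∀ x : Fin n, x.val ≠ 0 → f x < x)

include hf

lemma fj_mem_mySet {j : Fin n} (hj : j.val ≠ 0) : f j ∈ mySet f j :=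
  mem_mySet.2 ⟨gstep_of_lt (hf j hj), Or.inr rfl⟩

lemma j_mem_mySet {j : Fin n} (hj : j.val ≠ 0) : j ∈ mySet f j := by
  refine mem_mySet.2 ⟨?_, Or.inl le_rfl⟩
  rw [gstep_of_ge (lt_irrefl j) (hf j hj)]
  exact gstep_of_lt (hf j hj)

lemma mySet_lower {j : Fin n} (hj : j.val ≠ 0) :
    ∀ x ∈ mySet f j, x = f j ∨ j ≤ x := by
  intro x hx
  rcases (mem_mySet.1 hx).2 with h | h
  · exact Or.inr h
  · exact Or.inl h

lemma minTwo_mySet {j : Fin n} (hj : j.val ≠ 0) :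
    minTwo (mySet f j) = {f j, j} :=
  minTwo_eq_pair (fj_mem_mySet hf hj) (j_mem_mySet hf hj) (hf j hj) (mySet_lower hf hj)

lemma card_mySet {j : Fin n} (hj : j.val ≠ 0) : 2 ≤ (mySet f j).card := by
  have h1 : ({f j, j} : Finset (Fin n)) ⊆ mySet f j := by
    intro x hx
    rcases Finset.mem_insert.1 hx with rfl | hx
    · exact fj_mem_mySet hf hj
    · rw [Finset.mem_singleton.1 hx]
      exact j_mem_mySet hf hj
  calc 2 = ({f j, j} : Finset (Fin n)).card := (Finset.card_pair (ne_of_lt (hf j hj))).symm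
    _ ≤ _ := Finset.card_le_card h1

lemma mySet_subset_of_inter {i j : Fin n} (hj : j.val ≠ 0) (hij : j < i)
    {k : Fin n} (hki : k ∈ mySet f i) (hkj : k ∈ mySet f j) :
    mySet f i ⊆ mySet f j := by
  have hi : i.val ≠ 0 := by
    have h1 := Fin.lt_def.1 hij
    omega
  have hkey : gstep f j (f i) = f j := by
    have h1 := (mem_mySet.1 hki).1
    have h2 := (mem_mySet.1 hkj).1
    rw [← h2, ← gstep_comp hf hj (le_of_lt hij) k, h1]
  intro x hx
  rw [mem_mySet] at hx ⊢
  constructor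
  · rw [← gstep_comp hf hj (le_of_lt hij) x, hx.1]
    exact hkey
  · rcases hx.2 with h | h
    · exact Or.inl ((le_of_lt hij).trans h)
    · -- x = f i
      by_cases h' : f i < j
      · right
        rw [h, ← hkey, gstep_of_lt h']
      · left
        rw [h, Fin.le_def]
        rw [Fin.not_lt, Fin.le_def] at h'
        exact h'

end MySet

section Graph

variable {n : ℕ} {f : Fin n → Fin n}

lemma card_nonzeros (hn : 1 ≤ n) :
    (Finset.univ.filter (fun j : Fin n => j.val ≠ 0)).card = n - 1 := by
  have h0 : (⟨0, by omega⟩ : Fin n) ∈ (Finset.univ : Finset (Fin n)) := Finset.mem_univ _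
  have : (Finset.univ.filter (fun j : Fin n => j.val ≠ 0)) =
      Finset.univ.erase ⟨0, by omega⟩ := by
    ext x
    simp [Fin.ext_iff]
  rw [this, Finset.card_erase_of_mem h0, Finset.card_univ, Fintype.card_fin]

lemma graphOf_adj_iff (hf : ∀ x : Fin n, x.val ≠ 0 → f x < x) {x y : Fin n} :
    (graphOf ((Finset.univ.filter (fun j : Fin n => j.val ≠ 0)).image
        (fun j => ({f j, j} : Finset (Fin n))))).Adj x y ↔
      ∃ j : Fin n, j.val ≠ 0 ∧ ((x = f j ∧ y = j) ∨ (x = j ∧ y = f j)) := by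
  show (x ≠ y ∧ ∃ e ∈ (_ : Finset (Finset (Fin n))), x ∈ e ∧ y ∈ e) ↔ _
  constructor
  · rintro ⟨hxy, e, he, hxe, hye⟩
    obtain ⟨j, hj, rfl⟩ := Finset.mem_image.1 he
    rw [Finset.mem_filter] at hj
    refine ⟨j, hj.2, ?_⟩
    rw [Finset.mem_insert, Finset.mem_singleton] at hxe hye
    rcases hxe with hx | hx <;> rcases hye with hy | hy
    · exact absurd (hx.trans hy.symm) hxy
    · exact Or.inl ⟨hx, hy⟩
    · exact Or.inr ⟨hx, hy⟩
    · exact absurd (hx.trans hy.symm) hxy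
  · rintro ⟨j, hj, h | h⟩
    · refine ⟨?_, {f j, j}, Finset.mem_image.2 ⟨j, Finset.mem_filter.2 ⟨Finset.mem_univ _, hj⟩,
        rfl⟩, by simp [h.1], by simp [h.2]⟩
      rw [h.1, h.2]
      exact ne_of_lt (hf j hj)
    · refine ⟨?_, {f j, j}, Finset.mem_image.2 ⟨j, Finset.mem_filter.2 ⟨Finset.mem_univ _, hj⟩,
        rfl⟩, by simp [h.1], by simp [h.2]⟩
      rw [h.1, h.2]
      exact (ne_of_lt (hf j hj)).symm

lemma adj_down (hf : ∀ x : Fin n, x.val ≠ 0 → f x < x) {x y : Fin n}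
    (h : (graphOf ((Finset.univ.filter (fun j : Fin n => j.val ≠ 0)).image
        (fun j => ({f j, j} : Finset (Fin n))))).Adj x y) (hyx : y < x) :
    x.val ≠ 0 ∧ y = f x := by
  obtain ⟨j, hj, hc | hc⟩ := (graphOf_adj_iff hf).1 h
  · exfalso
    rw [hc.1, hc.2] at hyx
    exact absurd ((hf j hj).trans hyx) (lt_irrefl _)
  · rw [hc.1]
    exact ⟨hj, hc.2⟩

lemma reach_zero (hf : ∀ x : Fin n, x.val ≠ 0 → f x < x) (hn : 1 ≤ n) (x : Fin n) :
    (graphOf ((Finset.univ.filter (fun j : Fin n => j.val ≠ 0)).image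
        (fun j => ({f j, j} : Finset (Fin n))))).Reachable x ⟨0, by omega⟩ := by
  by_cases h : x.val = 0
  · have : x = ⟨0, by omega⟩ := Fin.ext h
    rw [this]
  · have hadj : (graphOf ((Finset.univ.filter (fun j : Fin n => j.val ≠ 0)).image
        (fun j => ({f j, j} : Finset (Fin n))))).Adj x (f x) :=
      (graphOf_adj_iff hf).2 ⟨x, h, Or.inr ⟨rfl, rfl⟩⟩
    exact hadj.reachable.trans (reach_zero hf hn (f x))
termination_by x.val
decreasing_by exact hf x h

lemma connected_graphOf (hf : ∀ x : Fin n, x.val ≠ 0 → f x < x) (hn : 1 ≤ n) :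
    (graphOf ((Finset.univ.filter (fun j : Fin n => j.val ≠ 0)).image
        (fun j => ({f j, j} : Finset (Fin n))))).Connected := by
  rw [SimpleGraph.connected_iff]
  exact ⟨fun u v => (reach_zero hf hn u).trans (reach_zero hf hn v).symm, ⟨⟨0, by omega⟩⟩⟩

lemma acyclic_graphOf (hf : ∀ x : Fin n, x.val ≠ 0 → f x < x) :
    (graphOf ((Finset.univ.filter (fun j : Fin n => j.val ≠ 0)).image
        (fun j => ({f j, j} : Finset (Fin n))))).IsAcyclic := by
  classical
  intro v c hc
  have hsne : c.support.toFinset.Nonempty :=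
    ⟨v, List.mem_toFinset.2 c.start_mem_support⟩
  set m := c.support.toFinset.max' hsne with hmdef
  have hm : m ∈ c.support := List.mem_toFinset.1 (c.support.toFinset.max'_mem hsne)
  have hc' : (c.rotate m hm).IsCycle := hc.rotate hm
  have hsup : ∀ x ∈ (c.rotate m hm).support, x ≤ m := by
    intro x hx
    rw [SimpleGraph.Walk.support_eq_cons] at hx
    rcases List.mem_cons.1 hx with rfl | hx
    · exact le_refl _
    · have h1 : x ∈ c.support.tail :=
        ((SimpleGraph.Walk.support_rotate c m hm).mem_iff).1 hx
      have h2 : x ∈ c.support := by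
        rw [SimpleGraph.Walk.support_eq_cons]
        exact List.mem_cons.2 (Or.inr h1)
      exact c.support.toFinset.le_max' x (List.mem_toFinset.2 h2)
  generalize hgen : c.rotate m hm = c' at hc' hsup
  -- decompose c' from the front
  have hnn : ¬ c'.Nil := by
    rw [SimpleGraph.Walk.nil_iff_eq_nil]
    exact hc'.ne_nil
  obtain ⟨u, hadj, p, hpeq⟩ := SimpleGraph.Walk.not_nil_iff.1 hnn
  -- decompose c'.reverse from the front
  have hnn2 : ¬ c'.reverse.Nil := by
    rw [SimpleGraph.Walk.not_nil_iff_lt_length, SimpleGraph.Walk.length_reverse]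
    have := hc'.three_le_length
    omega
  obtain ⟨w, hadj2, p2, hp2eq⟩ := SimpleGraph.Walk.not_nil_iff.1 hnn2
  -- u and w are both f m
  have hum : u ≤ m := by
    apply hsup
    rw [hpeq, SimpleGraph.Walk.support_cons]
    exact List.mem_cons.2 (Or.inr p.start_mem_support)
  have humlt : u < m := lt_of_le_of_ne hum (fun h => hadj.ne' (h ▸ rfl))
  have hufm : u = f m := (adj_down hf hadj humlt).2
  have hwm : w ≤ m := by
    apply hsup
    have hw1 : w ∈ c'.reverse.support := by
      rw [hp2eq, SimpleGraph.Walk.support_cons]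
      exact List.mem_cons.2 (Or.inr p2.start_mem_support)
    rw [SimpleGraph.Walk.support_reverse, List.mem_reverse] at hw1
    exact hw1
  have hwmlt : w < m := lt_of_le_of_ne hwm (fun h => hadj2.ne' (h ▸ rfl))
  have hwfm : w = f m := (adj_down hf hadj2 hwmlt).2
  -- edge list contradiction
  have hnd : c'.edges.Nodup := hc'.edges_nodup
  have hedge : c'.edges = s(m, u) :: p.edges := by
    rw [hpeq, SimpleGraph.Walk.edges_cons]
  have hrevedge : c'.reverse.edges = s(m, w) :: p2.edges := by
    rw [hp2eq, SimpleGraph.Walk.edges_cons]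
  have hpne : p.edges ≠ [] := by
    intro h
    have hlen : p.length = 0 := by
      have h2 := SimpleGraph.Walk.length_edges p
      rw [h] at h2
      simpa using h2.symm
    exact hadj.ne (SimpleGraph.Walk.eq_of_length_eq_zero hlen).symm
  obtain ⟨x, xs, hxe⟩ := List.exists_cons_of_ne_nil (fun h =>
    hpne (List.reverse_eq_nil_iff.1 h))
  have hlist : p.edges.reverse ++ [s(m, u)] = s(m, w) :: p2.edges := by
    rw [← List.reverse_cons, ← hedge, ← SimpleGraph.Walk.edges_reverse, hrevedge]
  rw [hxe, List.cons_append] at hlist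
  obtain ⟨hxeq, -⟩ := List.cons_eq_cons.1 hlist
  have huw : u = w := hufm.trans hwfm.symm
  have hxin : s(m, u) ∈ p.edges := by
    have hx1 : x ∈ p.edges.reverse := hxe ▸ List.mem_cons_self (a := x) (l := xs)
    rw [List.mem_reverse] at hx1
    rw [hxeq, ← huw] at hx1
    exact hx1
  rw [hedge] at hnd
  exact (List.nodup_cons.1 hnd).1 hxin

end Graph

/-- The nonzero indices. -/
def nzs (n : ℕ) : Finset (Fin n) := Finset.univ.filter (fun j : Fin n => j.val ≠ 0)

lemma mem_nzs {n : ℕ} {j : Fin n} : j ∈ nzs n ↔ j.val ≠ 0 := by simp [nzs]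

lemma card_nzs {n : ℕ} (hn : 1 ≤ n) : (nzs n).card = n - 1 := card_nonzeros hn

section Psi

variable {n : ℕ} {f : Fin n → Fin n} (hf : ∀ x : Fin n, x.val ≠ 0 → f x < x)

include hf

lemma pair_injOn : Set.InjOn (fun j => ({f j, j} : Finset (Fin n))) ↑(nzs n) := by
  intro a ha b hb hab
  rw [Finset.mem_coe, mem_nzs] at ha hb
  exact (pair_eq_pair_iff (hf a ha) (hf b hb) hab).2

lemma mySet_injOn : Set.InjOn (mySet f) ↑(nzs n) := by
  intro a ha b hb hab
  rw [Finset.mem_coe, mem_nzs] at ha hb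
  have h1 : ({f a, a} : Finset (Fin n)) = {f b, b} := by
    rw [← minTwo_mySet hf ha, ← minTwo_mySet hf hb, hab]
  exact (pair_eq_pair_iff (hf a ha) (hf b hb) h1).2

lemma psi_goodLaminar : GoodLaminar n ((nzs n).image (mySet f)) := by
  constructor
  · intro S hS T hT
    obtain ⟨a, ha, rfl⟩ := Finset.mem_image.1 hS
    obtain ⟨b, hb, rfl⟩ := Finset.mem_image.1 hT
    rw [mem_nzs] at ha hb
    by_cases hd : Disjoint (mySet f a) (mySet f b)
    · exact Or.inr (Or.inr hd)
    · obtain ⟨k, hka, hkb⟩ := Finset.not_disjoint_iff.1 hd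
      rcases lt_trichotomy a b with h | h | h
      · exact Or.inr (Or.inl (mySet_subset_of_inter hf ha h hkb hka))
      · rw [h]
        exact Or.inl (Finset.Subset.refl _)
      · exact Or.inl (mySet_subset_of_inter hf hb h hka hkb)
  · intro S hS
    obtain ⟨a, ha, rfl⟩ := Finset.mem_image.1 hS
    exact card_mySet hf (mem_nzs.1 ha)

lemma psi_card (hn : 1 ≤ n) : ((nzs n).image (mySet f)).card = n - 1 := by
  rw [Finset.card_image_of_injOn (mySet_injOn hf), card_nzs hn]

lemma psi_max (hn : 2 ≤ n) : MaxGoodLaminar n ((nzs n).image (mySet f)) := by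
  refine ⟨psi_goodLaminar hf, fun G hG hFG => ?_⟩
  apply (Finset.eq_of_subset_of_card_le hFG ?_).symm
  rw [psi_card hf (by omega)]
  exact goodLaminar_card_le hn G hG

lemma psi_image : ((nzs n).image (mySet f)).image minTwo =
    (nzs n).image (fun j => ({f j, j} : Finset (Fin n))) := by
  rw [Finset.image_image]
  apply Finset.image_congr
  intro j hj
  exact minTwo_mySet hf (mem_nzs.1 (by simpa using hj))

lemma spanning_pairs (hn : 2 ≤ n) :
    IsSpanningTree n ((nzs n).image (fun j => ({f j, j} : Finset (Fin n)))) := by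
  refine ⟨?_, ?_, ?_, ?_⟩
  · intro e he
    obtain ⟨j, hj, rfl⟩ := Finset.mem_image.1 he
    exact Finset.card_pair (ne_of_lt (hf j (mem_nzs.1 hj)))
  · rw [Finset.card_image_of_injOn (pair_injOn hf), card_nzs (by omega)]
  · exact connected_graphOf hf (by omega)
  · exact acyclic_graphOf hf

end Psi

lemma sigma_reconstruct {n : ℕ} (hn : 2 ≤ n) (F : Finset (Finset (Fin n)))
    (hlam : Laminar F) (hcard2 : ∀ S ∈ F, 2 ≤ S.card)
    (hst : IsSpanningTree n (F.image minTwo)) :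
    ∃ f : Fin n → Fin n, (∀ j : Fin n, j.val ≠ 0 → f j < j) ∧
      F.image minTwo = (nzs n).image (fun j => ({f j, j} : Finset (Fin n))) ∧
      F = (nzs n).image (mySet f) := by
  classical
  have hz : (0 : ℕ) < n := by omega
  set z0 : Fin n := ⟨0, hz⟩ with hz0
  -- characterization of members
  have key1 : ∀ S ∈ F, ∃ a b : Fin n, a ∈ S ∧ b ∈ S ∧ a < b ∧
      (∀ x ∈ S, x = a ∨ b ≤ x) ∧ minTwo S = {a, b} := by
    intro S hS
    have hne : S.Nonempty := Finset.card_pos.1 (by have := hcard2 S hS; omega)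
    set a := S.min' hne with ha
    have hne2 : (S.erase a).Nonempty := by
      rw [← Finset.card_pos, Finset.card_erase_of_mem (S.min'_mem hne)]
      have := hcard2 S hS; omega
    set b := (S.erase a).min' hne2 with hb
    have hbS : b ∈ S := Finset.mem_of_mem_erase ((S.erase a).min'_mem hne2)
    have hba : b ≠ a := Finset.ne_of_mem_erase ((S.erase a).min'_mem hne2)
    have hab : a < b := lt_of_le_of_ne (S.min'_le b hbS) (Ne.symm hba)
    have hminch : ∀ x ∈ S, x = a ∨ b ≤ x := by
      intro x hx
      by_cases hxa : x = a
      · exact Or.inl hxa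
      · exact Or.inr ((S.erase a).min'_le x (Finset.mem_erase.2 ⟨hxa, hx⟩))
    exact ⟨a, b, S.min'_mem hne, hbS, hab, hminch,
      minTwo_eq_pair (S.min'_mem hne) hbS hab hminch⟩
  -- members with the same second-min have the same min
  have key2 : ∀ S ∈ F, ∀ T ∈ F, ∀ (a b a' : Fin n), a ∈ S → b ∈ S → a < b →
      (∀ x ∈ S, x = a ∨ b ≤ x) → a' ∈ T → b ∈ T → a' < b →
      (∀ x ∈ T, x = a' ∨ b ≤ x) → a = a' := by
    intro S hS T hT a b a' haS hbS hab hchS ha'T hbT ha'b hchT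
    rcases hlam S hS T hT with h | h | h
    · rcases hchT a (h haS) with h' | h'
      · exact h'
      · exact absurd (lt_of_le_of_lt h' hab) (lt_irrefl _)
    · rcases hchS a' (h ha'T) with h' | h'
      · exact h'.symm
      · exact absurd (lt_of_le_of_lt h' ha'b) (lt_irrefl _)
    · exact absurd hbT (Finset.disjoint_left.1 h hbS)
  -- cardinalities
  have hce : (F.image minTwo).card = n - 1 := hst.2.1
  have hcF1 : F.card ≤ n - 1 := goodLaminar_card_le hn F ⟨hlam, hcard2⟩
  have hcF2 : n - 1 ≤ F.card := hce ▸ Finset.card_image_le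
  have hcF : F.card = n - 1 := le_antisymm hcF1 hcF2
  -- the max' function on edges
  set mx : Finset (Fin n) → Fin n := fun e => if h : e.Nonempty then e.max' h else z0
    with hmx
  have pairmax : ∀ a b : Fin n, a < b → mx {a, b} = b := by
    intro a b hab
    have hne : ({a, b} : Finset (Fin n)).Nonempty := ⟨a, by simp⟩
    rw [hmx]
    simp only [dif_pos hne]
    apply le_antisymm
    · apply Finset.max'_le
      intro y hy
      rcases Finset.mem_insert.1 hy with rfl | hy
      · exact le_of_lt hab
      · rw [Finset.mem_singleton.1 hy]
    · exact Finset.le_max' _ b (by simp)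
  -- mx is injective on the edge set, with image the nonzero indices
  have hmxinj : Set.InjOn mx ↑(F.image minTwo) := by
    intro e he e' he' hee
    rw [Finset.mem_coe] at he he'
    obtain ⟨S, hS, rfl⟩ := Finset.mem_image.1 he
    obtain ⟨T, hT, rfl⟩ := Finset.mem_image.1 he'
    obtain ⟨a, b, h1, h2, h3, h4, h5⟩ := key1 S hS
    obtain ⟨a', b', h1', h2', h3', h4', h5'⟩ := key1 T hT
    rw [h5, h5'] at hee ⊢
    rw [pairmax a b h3, pairmax a' b' h3'] at hee
    subst hee
    rw [key2 S hS T hT a b a' h1 h2 h3 h4 h1' h2' h3' h4']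
  have hmximg : (F.image minTwo).image mx = nzs n := by
    apply Finset.eq_of_subset_of_card_le
    · intro j hj
      obtain ⟨e, he, rfl⟩ := Finset.mem_image.1 hj
      obtain ⟨S, hS, rfl⟩ := Finset.mem_image.1 he
      obtain ⟨a, b, h1, h2, h3, h4, h5⟩ := key1 S hS
      rw [h5, pairmax a b h3, mem_nzs]
      have := Fin.lt_def.1 h3
      omega
    · rw [Finset.card_image_of_injOn hmxinj, hce, card_nzs (by omega)]
  -- choose, for each nonzero j, the member of F with second-min j
  have hexists : ∀ j : Fin n, ∃ T : Finset (Fin n), j.val ≠ 0 →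
      T ∈ F ∧ ∃ a : Fin n, a ∈ T ∧ j ∈ T ∧ a < j ∧ (∀ x ∈ T, x = a ∨ j ≤ x) := by
    intro j
    by_cases hj : j.val ≠ 0
    · have hjnz : j ∈ nzs n := mem_nzs.2 hj
      rw [← hmximg] at hjnz
      obtain ⟨e, he, hej⟩ := Finset.mem_image.1 hjnz
      obtain ⟨S, hS, rfl⟩ := Finset.mem_image.1 he
      obtain ⟨a, b, h1, h2, h3, h4, h5⟩ := key1 S hS
      rw [h5, pairmax a b h3] at hej
      subst hej
      exact ⟨S, fun _ => ⟨hS, a, h1, h2, h3, h4⟩⟩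
    · exact ⟨∅, fun h => absurd h hj⟩
  choose S hSmem using hexists
  -- the parent function
  have hexf : ∀ j : Fin n, ∃ a : Fin n, j.val ≠ 0 →
      a ∈ S j ∧ j ∈ S j ∧ a < j ∧ (∀ x ∈ S j, x = a ∨ j ≤ x) := by
    intro j
    by_cases hj : j.val ≠ 0
    · obtain ⟨-, a, h1, h2, h3, h4⟩ := hSmem j hj
      exact ⟨a, fun _ => ⟨h1, h2, h3, h4⟩⟩
    · exact ⟨z0, fun h => absurd h hj⟩
  choose f hfspec using hexf
  have hf : ∀ j : Fin n, j.val ≠ 0 → f j < j := fun j hj => (hfspec j hj).2.2.1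
  have hSF : ∀ j : Fin n, j.val ≠ 0 → S j ∈ F := fun j hj => (hSmem j hj).1
  have hfj : ∀ j : Fin n, j.val ≠ 0 → f j ∈ S j := fun j hj => (hfspec j hj).1
  have hjS : ∀ j : Fin n, j.val ≠ 0 → j ∈ S j := fun j hj => (hfspec j hj).2.1
  have hch : ∀ j : Fin n, j.val ≠ 0 → ∀ x ∈ S j, x = f j ∨ j ≤ x :=
    fun j hj => (hfspec j hj).2.2.2
  have hminTwoS : ∀ j : Fin n, j.val ≠ 0 → minTwo (S j) = {f j, j} := by
    intro j hj
    exact minTwo_eq_pair (hfj j hj) (hjS j hj) (hf j hj) (hch j hj)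
  -- laminar comparison: a member containing something of S j must be inside S j
  have hcmp : ∀ j : Fin n, j.val ≠ 0 → ∀ x : Fin n, x.val ≠ 0 → j < x →
      (¬ Disjoint (S x) (S j)) → S x ⊆ S j := by
    intro j hj x hx hjx hnd
    rcases hlam (S x) (hSF x hx) (S j) (hSF j hj) with h | h | h
    · exact h
    · exfalso
      have hfjx : f j ∈ S x := h (hfj j hj)
      have hjx2 : j ∈ S x := h (hjS j hj)
      have h1 : f j = f x ∨ x ≤ f j := hch x hx (f j) hfjx
      have h2 : j = f x ∨ x ≤ j := hch x hx j hjx2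
      rcases h2 with h2 | h2
      · rcases h1 with h1 | h1
        · rw [← h2] at h1
          exact absurd (h1 ▸ hf j hj) (lt_irrefl _)
        · exact absurd (lt_of_le_of_lt h1 ((hf j hj).trans hjx)) (lt_irrefl _)
      · exact absurd (lt_of_le_of_lt h2 hjx) (lt_irrefl _)
    · exact absurd h hnd
  -- main induction: S j = mySet f j pointwise
  have main : ∀ N : ℕ, ∀ x : Fin n, x.val < N → ∀ j : Fin n, j.val ≠ 0 →
      (x ∈ S j ↔ x ∈ mySet f j) := by
    intro N
    induction N with
    | zero => intro x hx; omega
    | succ N ih =>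
      intro x hxN j hj
      constructor
      · intro hxS
        by_cases hxa : x = f j
        · rw [hxa]; exact fj_mem_mySet hf hj
        · have hjx : j ≤ x := by
            rcases hch j hj x hxS with h | h
            · exact absurd h hxa
            · exact h
          by_cases hxj : x = j
          · rw [hxj]; exact j_mem_mySet hf hj
          · have hjltx : j < x := lt_of_le_of_ne hjx (Ne.symm hxj)
            have hx0 : x.val ≠ 0 := by
              have := Fin.lt_def.1 hjltx; omega
            have hnd : ¬ Disjoint (S x) (S j) :=
              Finset.not_disjoint_iff.2 ⟨x, hjS x hx0, hxS⟩
            have hsub : S x ⊆ S j := hcmp j hj x hx0 hjltx hnd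
            have hfxSj : f x ∈ S j := hsub (hfj x hx0)
            have hfxlt : (f x).val < x.val := Fin.lt_def.1 (hf x hx0)
            have hIH : f x ∈ mySet f j := (ih (f x) (by omega) j hj).1 hfxSj
            rw [mem_mySet] at hIH ⊢
            refine ⟨?_, Or.inl hjx⟩
            rw [gstep_of_ge (Fin.not_lt.2 (le_of_lt hjltx)) (hf x hx0)]
            exact hIH.1
      · intro hxM
        rw [mem_mySet] at hxM
        rcases hxM.2 with hjx | hxa
        · by_cases hxj : x = j
          · rw [hxj]; exact hjS j hj
          · have hjltx : j < x := lt_of_le_of_ne hjx (Ne.symm hxj)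
            have hx0 : x.val ≠ 0 := by
              have := Fin.lt_def.1 hjltx; omega
            have hgfx : gstep f j (f x) = f j := by
              rw [← gstep_of_ge (Fin.not_lt.2 (le_of_lt hjltx)) (hf x hx0)]
              exact hxM.1
            have hfxM : f x ∈ mySet f j := by
              rw [mem_mySet]
              refine ⟨hgfx, ?_⟩
              by_cases hlt : f x < j
              · right
                rw [← hgfx, gstep_of_lt hlt]
              · left
                exact Fin.not_lt.1 hlt
            have hfxlt : (f x).val < x.val := Fin.lt_def.1 (hf x hx0)
            have hfxSj : f x ∈ S j := (ih (f x) (by omega) j hj).2 hfxM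
            have hnd : ¬ Disjoint (S x) (S j) :=
              Finset.not_disjoint_iff.2 ⟨f x, hfj x hx0, hfxSj⟩
            exact hcmp j hj x hx0 hjltx hnd (hjS x hx0)
        · rw [hxa]
          exact hfj j hj
  have hSeq : ∀ j : Fin n, j.val ≠ 0 → S j = mySet f j := by
    intro j hj
    ext x
    exact main (x.val + 1) x (by omega) j hj
  refine ⟨f, hf, ?_, ?_⟩
  · -- image of minTwo is the set of pairs
    apply Finset.Subset.antisymm
    · intro e he
      obtain ⟨T, hT, rfl⟩ := Finset.mem_image.1 he
      obtain ⟨a, b, h1, h2, h3, h4, h5⟩ := key1 T hT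
      have hb0 : b.val ≠ 0 := by have := Fin.lt_def.1 h3; omega
      have hab : a = f b := key2 T hT (S b) (hSF b hb0) a b (f b) h1 h2 h3 h4
        (hfj b hb0) (hjS b hb0) (hf b hb0) (hch b hb0)
      rw [h5, hab]
      exact Finset.mem_image.2 ⟨b, mem_nzs.2 hb0, rfl⟩
    · intro e he
      obtain ⟨j, hj, rfl⟩ := Finset.mem_image.1 he
      rw [mem_nzs] at hj
      exact Finset.mem_image.2 ⟨S j, hSF j hj, hminTwoS j hj⟩
  · -- F is the image of mySet
    have himg : (nzs n).image (mySet f) ⊆ F := by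
      intro T hT
      obtain ⟨j, hj, rfl⟩ := Finset.mem_image.1 hT
      rw [mem_nzs] at hj
      rw [← hSeq j hj]
      exact hSF j hj
    apply (Finset.eq_of_subset_of_card_le himg ?_).symm
    rw [psi_card hf (by omega), hcF]


/-- For `n ≥ 2`, the map `Φ : F ↦ {{min S, secondmin S} : S ∈ F}` restricts to a bijection
from the proper maximal laminar families (maximal laminar families of subsets of `[n]` with
members of cardinality `≥ 2` for which `Φ(F)` is a spanning tree of `K_n`) onto the set of
edge sets of the form `{{f j, j} : j ≠ 0}` with `f j < j`, i.e. the no broken circuit bases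
of `Π_n` with respect to the lexicographic atom order. -/
theorem phi_bijOn_proper_nbc (n : ℕ) (hn : 2 ≤ n) :
    Set.BijOn (fun F : Finset (Finset (Fin n)) => F.image minTwo)
      {F | MaxGoodLaminar n F ∧ IsSpanningTree n (F.image minTwo)}
      {E | ∃ f : Fin n → Fin n, (∀ j : Fin n, j.val ≠ 0 → f j < j) ∧
        E = (Finset.univ.filter (fun j : Fin n => j.val ≠ 0)).image
              (fun j => ({f j, j} : Finset (Fin n)))} := by
  refine ⟨?_, ?_, ?_⟩
  · -- MapsTo
    intro F hF
    obtain ⟨⟨⟨hlam, hc2⟩, -⟩, hst⟩ := hF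
    obtain ⟨f, hf, himg, -⟩ := sigma_reconstruct hn F hlam hc2 hst
    exact ⟨f, hf, himg⟩
  · -- InjOn
    intro F hF G hG hFG
    obtain ⟨⟨⟨hlamF, hc2F⟩, -⟩, hstF⟩ := hF
    obtain ⟨⟨⟨hlamG, hc2G⟩, -⟩, hstG⟩ := hG
    obtain ⟨f, hf, himgF, hFeq⟩ := sigma_reconstruct hn F hlamF hc2F hstF
    obtain ⟨f', hf', himgG, hGeq⟩ := sigma_reconstruct hn G hlamG hc2G hstG
    have hpairs : (nzs n).image (fun j => ({f j, j} : Finset (Fin n))) =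
        (nzs n).image (fun j => ({f' j, j} : Finset (Fin n))) := by
      rw [← himgF, ← himgG]
      simpa using hFG
    have hagree : ∀ j : Fin n, j.val ≠ 0 → f j = f' j := by
      intro j hj
      have hmem : ({f j, j} : Finset (Fin n)) ∈
          (nzs n).image (fun j => ({f' j, j} : Finset (Fin n))) := by
        rw [← hpairs]
        exact Finset.mem_image.2 ⟨j, mem_nzs.2 hj, rfl⟩
      obtain ⟨i, hi, hpe⟩ := Finset.mem_image.1 hmem
      rw [mem_nzs] at hi
      obtain ⟨h1, h2⟩ := pair_eq_pair_iff (hf' i hi) (hf j hj) hpe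
      rw [← h2] at h1 ⊢
      exact h1.symm
    have himgeq : (nzs n).image (mySet f) = (nzs n).image (mySet f') := by
      apply Finset.image_congr
      intro j hj
      have hj0 : j.val ≠ 0 := mem_nzs.1 (by simpa using hj)
      ext x
      rw [mem_mySet, mem_mySet, gstep_congr hf hagree hj0 x, hagree j hj0]
    rw [hFeq, hGeq, himgeq]
  · -- SurjOn
    intro E hE
    obtain ⟨f, hf, rfl⟩ := hE
    refine ⟨(nzs n).image (mySet f), ⟨psi_max hf hn, ?_⟩, ?_⟩
    · show IsSpanningTree n _
      rw [psi_image hf]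
      exact spanning_pairs hf hn
    · show ((nzs n).image (mySet f)).image minTwo = _
      rw [psi_image hf]
      rfl
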